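/- Let N ≥ 2, λ > 0, T_L, T_R > 0, and let T_i = λα·i + b for i ∈ {1,…,N} with α = (T_R − T_L)/(λ(N−1)+2) and b = (T_L + T_R + λ(N·T_L − T_R))/(λ(N−1)+2) (so all T_i > 0). For ξ : {0,…,N+1} → ℕ define ψ(ξ) = T_L^{ξ_0}·T_R^{ξ_{N+1}}·∏_{i=1}^N T_i^{ξ_i}. Then the dual generator applied to ψ satisfies the exact identity (L_d ψ)(ξ) = 4λ²α²·ψ(ξ)·Σ_{i=1}^{N−1} ξ_i ξ_{i+1}/(T_i T_{i+1}), where (L_d ψ)(ξ) = 2λξ_1[ψ(ξ^{1,0}) − ψ(ξ)] + Σ_{i=1}^{N−1}( 2ξ_{i+1}(2ξ_i+1)[ψ(ξ^{i+1,i}) − ψ(ξ)] + 2ξ_i(2ξ_{i+1}+1)[ψ(ξ^{i,i+1}) − ψ(ξ)] ) + 2λξ_N[ψ(ξ^{N,N+1}) − ψ(ξ)]. -/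

import Mathlib

/-- `ξ^{i,j}`: the configuration obtained from `ξ` by removing one particle from
site `i` and adding one at site `j`. -/
def moveParticle (ξ : ℕ → ℕ) (i j : ℕ) : ℕ → ℕ :=
  fun k => if k = i then ξ i - 1 else if k = j then ξ j + 1 else ξ k

lemma prod_move (M : ℕ) (S : ℕ → ℝ) (ξ : ℕ → ℕ) (i j : ℕ)
    (hij : i ≠ j) (hi : i ∈ Finset.Icc 0 M) (hj : j ∈ Finset.Icc 0 M) (hξ : 1 ≤ ξ i) :
    (∏ k ∈ Finset.Icc 0 M, S k ^ moveParticle ξ i j k) * S i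
      = (∏ k ∈ Finset.Icc 0 M, S k ^ ξ k) * S j := by
  classical
  have hj' : j ∈ (Finset.Icc 0 M).erase i := Finset.mem_erase.2 ⟨Ne.symm hij, hj⟩
  have expand : ∀ g : ℕ → ℕ, (∏ k ∈ Finset.Icc 0 M, S k ^ g k)
      = S i ^ g i * (S j ^ g j * ∏ k ∈ ((Finset.Icc 0 M).erase i).erase j, S k ^ g k) := by
    intro g
    rw [← Finset.mul_prod_erase _ _ hi, ← Finset.mul_prod_erase _ _ hj']
  rw [expand, expand]
  have hrest : ∏ k ∈ ((Finset.Icc 0 M).erase i).erase j, S k ^ moveParticle ξ i j k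
      = ∏ k ∈ ((Finset.Icc 0 M).erase i).erase j, S k ^ ξ k := by
    apply Finset.prod_congr rfl
    intro k hk
    simp only [Finset.mem_erase] at hk
    simp [moveParticle, hk.1, hk.2.1]
  rw [hrest]
  have hmi : moveParticle ξ i j i = ξ i - 1 := by simp [moveParticle]
  have hmj : moveParticle ξ i j j = ξ j + 1 := by simp [moveParticle, Ne.symm hij]
  rw [hmi, hmj]
  have hpow : S i ^ (ξ i - 1) * S i = S i ^ ξ i := by
    rw [← pow_succ]; congr 1; omega
  rw [← hpow, pow_succ]
  ring

lemma telescope (f : ℕ → ℝ) (n : ℕ) :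
    ∑ i ∈ Finset.Icc 1 n, (f i - f (i + 1)) = f 1 - f (n + 1) := by
  induction n with
  | zero => simp
  | succ m ih => rw [Finset.sum_Icc_succ_top (by omega), ih]; ring

/-- Exact identity for the dual generator applied to the local-equilibrium
duality moments `ψ(ξ) = T_L^{ξ_0}·T_R^{ξ_{N+1}}·∏_{i=1}^N T_i^{ξ_i}`:
`(L_d ψ)(ξ) = 4λ²α²·ψ(ξ)·Σ_{i=1}^{N−1} ξ_i ξ_{i+1}/(T_i T_{i+1})`. -/
theorem dual_generator_on_local_equilibrium
    (N : ℕ) (hN : 2 ≤ N) (lam TL TR : ℝ) (hlam : 0 < lam)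
    (hTL : 0 < TL) (hTR : 0 < TR) (α b : ℝ)
    (hα : α = (TR - TL) / (lam * ((N : ℝ) - 1) + 2))
    (hb : b = (TL + TR + lam * ((N : ℝ) * TL - TR)) / (lam * ((N : ℝ) - 1) + 2))
    (T : ℕ → ℝ) (hT : ∀ i : ℕ, T i = lam * α * i + b)
    (ψ : (ℕ → ℕ) → ℝ)
    (hψ : ∀ ξ : ℕ → ℕ, ψ ξ = TL ^ ξ 0 * TR ^ ξ (N + 1) * ∏ i ∈ Finset.Icc 1 N, T i ^ ξ i)
    (ξ : ℕ → ℕ) :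
    2 * lam * (ξ 1 : ℝ) * (ψ (moveParticle ξ 1 0) - ψ ξ) +
      (∑ i ∈ Finset.Icc 1 (N - 1),
        (2 * (ξ (i + 1) : ℝ) * (2 * (ξ i : ℝ) + 1) *
            (ψ (moveParticle ξ (i + 1) i) - ψ ξ) +
          2 * (ξ i : ℝ) * (2 * (ξ (i + 1) : ℝ) + 1) *
            (ψ (moveParticle ξ i (i + 1)) - ψ ξ))) +
      2 * lam * (ξ N : ℝ) * (ψ (moveParticle ξ N (N + 1)) - ψ ξ)
    = 4 * lam ^ 2 * α ^ 2 * ψ ξ *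
        ∑ i ∈ Finset.Icc 1 (N - 1), (ξ i : ℝ) * (ξ (i + 1) : ℝ) / (T i * T (i + 1)) := by
  classical
  have hN2 : (2 : ℝ) ≤ (N : ℝ) := by exact_mod_cast hN
  have hDpos : 0 < lam * ((N : ℝ) - 1) + 2 := by nlinarith
  have hDne : lam * ((N : ℝ) - 1) + 2 ≠ 0 := ne_of_gt hDpos
  -- positivity of the temperature profile
  have hTpos : ∀ i : ℕ, 1 ≤ i → i ≤ N → 0 < T i := by
    intro i h1 h2
    have h1' : (1 : ℝ) ≤ (i : ℝ) := by exact_mod_cast h1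
    have h2' : (i : ℝ) ≤ (N : ℝ) := by exact_mod_cast h2
    have key : T i * (lam * ((N : ℝ) - 1) + 2)
        = lam * TL * ((N : ℝ) - i) + lam * TR * ((i : ℝ) - 1) + TL + TR := by
      rw [hT, hα, hb]; field_simp; ring
    nlinarith [mul_nonneg (mul_pos hlam hTL).le (by linarith : (0:ℝ) ≤ (N : ℝ) - i),
      mul_nonneg (mul_pos hlam hTR).le (by linarith : (0:ℝ) ≤ (i : ℝ) - 1)]
  have hdiffT : ∀ i : ℕ, T (i + 1) - T i = lam * α := by
    intro i; rw [hT, hT]; push_cast; ring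
  have hLrel : TL - T 1 = -α := by
    rw [hT, hα, hb]; push_cast; field_simp; ring
  have hRrel : TR - T N = α := by
    rw [hT, hα, hb]; field_simp; ring
  -- uniform single-site weights
  set S : ℕ → ℝ := fun k => if k = 0 then TL else if k = N + 1 then TR else T k with hSdef
  have hS0 : S 0 = TL := by simp [hSdef]
  have hSN1 : S (N + 1) = TR := by simp [hSdef]
  have hSmid : ∀ k : ℕ, 1 ≤ k → k ≤ N → S k = T k := by
    intro k h1 h2
    simp only [hSdef]
    rw [if_neg (by omega), if_neg (by omega)]
  have hψP : ∀ ζ : ℕ → ℕ, ψ ζ = ∏ k ∈ Finset.Icc 0 (N + 1), S k ^ ζ k := by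
    intro ζ
    rw [hψ]
    have h0 : Finset.Icc 0 (N + 1) = insert 0 (Finset.Icc 1 (N + 1)) := by
      ext k; simp [Finset.mem_Icc]; omega
    rw [h0, Finset.prod_insert (by simp), Finset.prod_Icc_succ_top (by omega), hS0, hSN1]
    have hm : ∏ k ∈ Finset.Icc 1 N, S k ^ ζ k = ∏ k ∈ Finset.Icc 1 N, T k ^ ζ k :=
      Finset.prod_congr rfl fun k hk => by
        rw [hSmid k (Finset.mem_Icc.1 hk).1 (Finset.mem_Icc.1 hk).2]
    rw [hm]; ring
  -- basic move identity
  have hmove : ∀ i j : ℕ, i ≠ j → i ≤ N + 1 → j ≤ N + 1 → S i ≠ 0 →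
      (ξ i : ℝ) * (ψ (moveParticle ξ i j) - ψ ξ)
        = (ξ i : ℝ) * ψ ξ * (S j - S i) / S i := by
    intro i j hij hi hj hSi
    rcases Nat.eq_zero_or_pos (ξ i) with h0 | h1
    · simp [h0]
    · have key := prod_move (N + 1) S ξ i j hij
        (Finset.mem_Icc.2 ⟨Nat.zero_le _, hi⟩) (Finset.mem_Icc.2 ⟨Nat.zero_le _, hj⟩) h1
      rw [hψP (moveParticle ξ i j), hψP ξ]
      field_simp
      linear_combination key
  have hT1ne : T 1 ≠ 0 := (hTpos 1 le_rfl (by omega)).ne'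
  have hTNne : T N ≠ 0 := (hTpos N (by omega) le_rfl).ne'
  have hS1 : S 1 = T 1 := hSmid 1 le_rfl (by omega)
  have hSN : S N = T N := hSmid N (by omega) le_rfl
  -- left boundary term
  have hB1 : 2 * lam * (ξ 1 : ℝ) * (ψ (moveParticle ξ 1 0) - ψ ξ)
      = -(ψ ξ * (2 * lam * α * (ξ 1 : ℝ) / T 1)) := by
    have h := hmove 1 0 (by omega) (by omega) (by omega) (by rw [hS1]; exact hT1ne)
    rw [hS0, hS1, hLrel] at h
    field_simp at h ⊢
    linear_combination h
  -- right boundary term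
  have hB2 : 2 * lam * (ξ N : ℝ) * (ψ (moveParticle ξ N (N + 1)) - ψ ξ)
      = ψ ξ * (2 * lam * α * (ξ N : ℝ) / T N) := by
    have h := hmove N (N + 1) (by omega) (by omega) (by omega) (by rw [hSN]; exact hTNne)
    rw [hSN1, hSN, hRrel] at h
    field_simp at h ⊢
    linear_combination h
  -- bulk terms
  have hbulk : ∀ i ∈ Finset.Icc 1 (N - 1),
      2 * (ξ (i + 1) : ℝ) * (2 * (ξ i : ℝ) + 1) * (ψ (moveParticle ξ (i + 1) i) - ψ ξ) +
        2 * (ξ i : ℝ) * (2 * (ξ (i + 1) : ℝ) + 1) * (ψ (moveParticle ξ i (i + 1)) - ψ ξ)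
      = (ψ ξ * (2 * lam * α * (ξ i : ℝ) / T i)
          - ψ ξ * (2 * lam * α * (ξ (i + 1) : ℝ) / T (i + 1)))
        + (4 * lam ^ 2 * α ^ 2 * ψ ξ) * ((ξ i : ℝ) * (ξ (i + 1) : ℝ) / (T i * T (i + 1))) := by
    intro i hi
    rw [Finset.mem_Icc] at hi
    have hi1 : 1 ≤ i := hi.1
    have hiN : i + 1 ≤ N := by omega
    have hTi : T i ≠ 0 := (hTpos i hi1 (by omega)).ne'
    have hTi1 : T (i + 1) ≠ 0 := (hTpos (i + 1) (by omega) hiN).ne'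
    have hSi : S i = T i := hSmid i hi1 (by omega)
    have hSi1 : S (i + 1) = T (i + 1) := hSmid (i + 1) (by omega) hiN
    have h1 := hmove (i + 1) i (by omega) (by omega) (by omega) (by rw [hSi1]; exact hTi1)
    have h2 := hmove i (i + 1) (by omega) (by omega) (by omega) (by rw [hSi]; exact hTi)
    rw [hSi, hSi1] at h1 h2
    have h1' : (ξ (i + 1) : ℝ) * (ψ (moveParticle ξ (i + 1) i) - ψ ξ) * T (i + 1)
        = (ξ (i + 1) : ℝ) * ψ ξ * (T i - T (i + 1)) := by
      rw [h1]; field_simp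
    have h2' : (ξ i : ℝ) * (ψ (moveParticle ξ i (i + 1)) - ψ ξ) * T i
        = (ξ i : ℝ) * ψ ξ * (T (i + 1) - T i) := by
      rw [h2]; field_simp
    have hd := hdiffT i
    field_simp
    linear_combination (2 * (2 * (ξ i : ℝ) + 1) * T i) * h1'
      + (2 * (2 * (ξ (i + 1) : ℝ) + 1) * T (i + 1)) * h2'
      + (ψ ξ * (-2 * T i * (ξ (i + 1) : ℝ) * (2 * (ξ i : ℝ) + 1)
          + 2 * T (i + 1) * (ξ i : ℝ) * (2 * (ξ (i + 1) : ℝ) + 1))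
        + 4 * lam * α * (ξ i : ℝ) * (ξ (i + 1) : ℝ) * ψ ξ) * hd
  rw [Finset.sum_congr rfl hbulk, Finset.sum_add_distrib]
  have htel : ∑ i ∈ Finset.Icc 1 (N - 1),
      (ψ ξ * (2 * lam * α * (ξ i : ℝ) / T i)
        - ψ ξ * (2 * lam * α * (ξ (i + 1) : ℝ) / T (i + 1)))
      = ψ ξ * (2 * lam * α * (ξ 1 : ℝ) / T 1) - ψ ξ * (2 * lam * α * (ξ N : ℝ) / T N) := by
    have h := telescope (fun k => ψ ξ * (2 * lam * α * (ξ k : ℝ) / T k)) (N - 1)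
    simpa [show N - 1 + 1 = N from by omega] using h
  rw [hB1, hB2, htel, ← Finset.mul_sum]
  ring
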